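/- Gaussian mechanism achieves (ε,δ)-DP: for ε ∈ (0,1) and a function f: D → ℝ^k with ℓ₂-sensitivity Δ = max over adjacent d,d' of ‖f(d) − f(d')‖₂, the mechanism M(d) = f(d) + Z with Z ~ N(0, σ²·I_k) and σ ≥ √(2·ln(1.25/δ))·Δ/ε is (ε,δ)-differentially private. -/

import Mathlib

open MeasureTheory ProbabilityTheory Real Set

lemma gaussPDF_prod {a b : NNReal} (ha : a ≠ 0) (hb : b ≠ 0) (x t : ℝ) :
    gaussianPDFReal 0 a x * gaussianPDFReal 0 b (t - x)
      = gaussianPDFReal 0 (a + b) t * gaussianPDFReal ((a : ℝ) * t / ((a : ℝ) + b)) (a * b / (a + b)) x := by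
  have ha' : (0:ℝ) < a := lt_of_le_of_ne (a.coe_nonneg) (by exact_mod_cast (Ne.symm ha))
  have hb' : (0:ℝ) < b := lt_of_le_of_ne (b.coe_nonneg) (by exact_mod_cast (Ne.symm hb))
  have hab : (0:ℝ) < (a:ℝ) + b := by linarith
  have hc : ((a * b / (a + b) : NNReal) : ℝ) = (a:ℝ) * b / ((a:ℝ) + b) := by
    push_cast; ring
  simp only [gaussianPDFReal, NNReal.coe_add, hc, sub_zero]
  have hπ : (0:ℝ) < 2 * π := by positivity
  -- constants
  have hconst : (√(2 * π * a))⁻¹ * (√(2 * π * b))⁻¹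
      = (√(2 * π * ((a:ℝ) + b)))⁻¹ * (√(2 * π * ((a:ℝ) * b / ((a:ℝ) + b))))⁻¹ := by
    rw [← mul_inv, ← mul_inv, ← Real.sqrt_mul (by positivity), ← Real.sqrt_mul (by positivity)]
    congr 1
    congr 1
    field_simp
  have hexp : rexp (-x ^ 2 / (2 * a)) * rexp (-(t - x) ^ 2 / (2 * b))
      = rexp (-t ^ 2 / (2 * ((a:ℝ) + b))) *
        rexp (-(x - (a:ℝ) * t / ((a:ℝ) + b)) ^ 2 / (2 * ((a:ℝ) * b / ((a:ℝ) + b)))) := by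
    rw [← Real.exp_add, ← Real.exp_add]
    congr 1
    field_simp
    ring
  calc (√(2 * π * a))⁻¹ * rexp (-x ^ 2 / (2 * a)) * ((√(2 * π * b))⁻¹ * rexp (-(t - x) ^ 2 / (2 * b)))
      = ((√(2 * π * a))⁻¹ * (√(2 * π * b))⁻¹) * (rexp (-x ^ 2 / (2 * a)) * rexp (-(t - x) ^ 2 / (2 * b))) := by ring
    _ = _ := by rw [hconst, hexp]; ring


lemma gauss_conv (a b : NNReal) :
    ((gaussianReal 0 a).prod (gaussianReal 0 b)).map (fun p : ℝ × ℝ => p.1 + p.2)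
      = gaussianReal 0 (a + b) := by
  by_cases ha : a = 0
  · subst ha
    rw [gaussianReal_zero_var, Measure.dirac_prod, Measure.map_map measurable_add measurable_prodMk_left]
    simp only [Function.comp_def, zero_add]
    simp [Measure.map_id]
  by_cases hb : b = 0
  · subst hb
    rw [gaussianReal_zero_var, Measure.prod_dirac, Measure.map_map measurable_add (measurable_prodMk_right)]
    simp only [Function.comp_def, add_zero]
    simp [Measure.map_id]
  have hab : a + b ≠ 0 := by positivity
  have hc : a * b / (a + b) ≠ 0 := by positivity
  ext s hs
  rw [Measure.map_apply measurable_add hs, Measure.prod_apply (measurable_add hs)]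
  have h1 : ∀ x : ℝ, (Prod.mk x ⁻¹' ((fun p : ℝ × ℝ => p.1 + p.2) ⁻¹' s)) = (fun y => x + y) ⁻¹' s := by
    intro x; rfl
  simp_rw [h1]
  have h2 : ∀ x : ℝ, (gaussianReal 0 b) ((fun y => x + y) ⁻¹' s)
      = ∫⁻ t in s, ENNReal.ofReal (gaussianPDFReal 0 b (t - x)) := by
    intro x
    rw [← Measure.map_apply (measurable_const_add x) hs, gaussianReal_map_const_add,
      zero_add, gaussianReal_apply _ hb]
    congr 1 with t
    rw [gaussianPDF]
    congr 1
    rw [gaussianPDFReal_sub, zero_add]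
  simp_rw [h2]
  have hmeas : Measurable fun x : ℝ => ∫⁻ t in s, ENNReal.ofReal (gaussianPDFReal 0 b (t - x)) := by
    apply Measurable.lintegral_prod_right (f := fun x t => ENNReal.ofReal (gaussianPDFReal 0 b (t - x)))
    exact ((measurable_gaussianPDFReal 0 b).comp (measurable_snd.sub measurable_fst)).ennreal_ofReal
  rw [gaussianReal_of_var_ne_zero _ ha,
    lintegral_withDensity_eq_lintegral_mul _ (measurable_gaussianPDF _ _) hmeas]
  simp only [Pi.mul_apply]
  have h3 : ∀ x : ℝ, gaussianPDF 0 a x * ∫⁻ t in s, ENNReal.ofReal (gaussianPDFReal 0 b (t - x))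
      = ∫⁻ t in s, gaussianPDF 0 a x * ENNReal.ofReal (gaussianPDFReal 0 b (t - x)) := by
    intro x
    rw [lintegral_const_mul _ ?_]
    exact ((measurable_gaussianPDFReal 0 b).comp (measurable_id.sub measurable_const)).ennreal_ofReal
  simp_rw [h3]
  rw [lintegral_lintegral_swap]
  swap
  · show AEMeasurable ((fun p : ℝ × ℝ => gaussianPDF 0 a p.1) * (fun p : ℝ × ℝ => ENNReal.ofReal (gaussianPDFReal 0 b (p.2 - p.1)))) _
    apply AEMeasurable.mul
    · exact ((measurable_gaussianPDF 0 a).comp measurable_fst).aemeasurable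
    · exact (((measurable_gaussianPDFReal 0 b).comp
        (measurable_snd.sub measurable_fst)).ennreal_ofReal).aemeasurable
  have h4 : ∀ t : ℝ, ∫⁻ x, gaussianPDF 0 a x * ENNReal.ofReal (gaussianPDFReal 0 b (t - x))
      = gaussianPDF 0 (a + b) t := by
    intro t
    have : ∀ x : ℝ, gaussianPDF 0 a x * ENNReal.ofReal (gaussianPDFReal 0 b (t - x))
        = gaussianPDF 0 (a + b) t *
          gaussianPDF ((a : ℝ) * t / ((a : ℝ) + b)) (a * b / (a + b)) x := by
      intro x
      rw [gaussianPDF, gaussianPDF, gaussianPDF, ← ENNReal.ofReal_mul (gaussianPDFReal_nonneg _ _ _),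
        ← ENNReal.ofReal_mul (gaussianPDFReal_nonneg _ _ _), gaussPDF_prod ha hb]
    simp_rw [this]
    rw [lintegral_const_mul _ (measurable_gaussianPDF _ _), lintegral_gaussianPDF_eq_one _ hc, mul_one]
  simp_rw [h4]
  rw [gaussianReal_apply _ hab]


lemma pi_gauss_map_sum (w : NNReal) : ∀ (n : ℕ) (c : Fin n → ℝ),
    (Measure.pi fun _ : Fin n => gaussianReal 0 w).map (fun z => ∑ i, c i * z i)
      = gaussianReal 0 (∑ i, (c i ^ 2).toNNReal * w) := by
  intro n
  induction n with
  | zero =>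
    intro c
    rw [Measure.pi_of_empty]
    simp only [Finset.univ_eq_empty, Finset.sum_empty]
    rw [Measure.map_dirac' (by fun_prop)]
    simp [gaussianReal_zero_var]
  | succ n ih =>
    intro c
    have key := (measurePreserving_piFinSuccAbove (fun _ : Fin (n+1) => gaussianReal 0 w) 0).map_eq
    have hcomp : (fun z : Fin (n+1) → ℝ => ∑ i, c i * z i)
        = (fun p : ℝ × (Fin n → ℝ) => c 0 * p.1 + ∑ j, c j.succ * p.2 j)
          ∘ (MeasurableEquiv.piFinSuccAbove (fun _ : Fin (n+1) => ℝ) 0) := by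
      funext z
      simp [MeasurableEquiv.piFinSuccAbove, Fin.zero_succAbove, Fin.sum_univ_succ, Fin.tail]
    rw [hcomp, ← Measure.map_map (by fun_prop) (MeasurableEquiv.measurable _), key]
    have hsplit : (fun p : ℝ × (Fin n → ℝ) => c 0 * p.1 + ∑ j, c j.succ * p.2 j)
        = (fun q : ℝ × ℝ => q.1 + q.2) ∘ (Prod.map (fun x => c 0 * x) (fun y => ∑ j, c j.succ * y j)) := by
      funext p; rfl
    rw [hsplit, ← Measure.map_map measurable_add (by fun_prop),
      ← Measure.map_prod_map _ _ (by fun_prop) (by fun_prop),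
      gaussianReal_map_const_mul, ih, mul_zero, gauss_conv]
    congr 1
    apply NNReal.coe_injective
    push_cast
    rw [Fin.sum_univ_succ]
    simp [Real.coe_toNNReal _ (sq_nonneg _)]

lemma lintegral_pi_fin (μ : Measure ℝ) [SigmaFinite μ] : ∀ (n : ℕ) (f : Fin n → ℝ → ENNReal),
    (∀ i, Measurable (f i)) →
    ∫⁻ z, ∏ i, f i (z i) ∂(Measure.pi fun _ : Fin n => μ) = ∏ i, ∫⁻ x, f i x ∂μ := by
  intro n
  induction n with
  | zero =>
    intro f _
    rw [Measure.pi_of_empty]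
    simp
  | succ n ih =>
    intro f hf
    have key := (measurePreserving_piFinSuccAbove (fun _ : Fin (n+1) => μ) 0)
    set e := MeasurableEquiv.piFinSuccAbove (fun _ : Fin (n+1) => ℝ) 0 with he
    set g : ℝ × (Fin n → ℝ) → ENNReal := fun p => f 0 p.1 * ∏ j, f j.succ (p.2 j) with hg
    have hgm : Measurable g := by
      apply Measurable.mul ((hf 0).comp measurable_fst)
      exact Finset.measurable_prod _ fun j _ => (hf j.succ).comp ((measurable_pi_apply j).comp measurable_snd)
    calc ∫⁻ z, ∏ i, f i (z i) ∂(Measure.pi fun _ : Fin (n+1) => μ)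
        = ∫⁻ z, g (e z) ∂(Measure.pi fun _ : Fin (n+1) => μ) := by
          refine lintegral_congr fun z => ?_
          simp [hg, he, MeasurableEquiv.piFinSuccAbove, Fin.zero_succAbove, Fin.tail,
            Fin.prod_univ_succ]
      _ = ∫⁻ p, g p ∂(μ.prod (Measure.pi fun _ : Fin n => μ)) := key.lintegral_comp hgm
      _ = (∫⁻ x, f 0 x ∂μ) * ∫⁻ y : Fin n → ℝ, ∏ j : Fin n, f j.succ (y j) ∂(Measure.pi fun _ : Fin n => μ) :=
          lintegral_prod_mul ((hf 0).aemeasurable)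
            ((Finset.measurable_prod _ fun (j : Fin n) _ => (hf j.succ).comp (measurable_pi_apply j)).aemeasurable)
      _ = ∏ i, ∫⁻ x, f i x ∂μ := by
          rw [ih (fun j => f j.succ) (fun j => hf j.succ), Fin.prod_univ_succ]

lemma pi_gauss_withDensity (k : ℕ) {w : NNReal} (hw : w ≠ 0) :
    Measure.pi (fun _ : Fin k => gaussianReal 0 w)
      = (volume : Measure (Fin k → ℝ)).withDensity (fun z => ∏ i, gaussianPDF 0 w (z i)) := by
  refine (Measure.pi_eq (μ := fun _ : Fin k => gaussianReal 0 w) fun s hs => ?_)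
  rw [withDensity_apply _ (MeasurableSet.univ_pi hs)]
  have : ∀ z : Fin k → ℝ, (univ.pi s).indicator (fun z => ∏ i, gaussianPDF 0 w (z i)) z
      = ∏ i, (s i).indicator (gaussianPDF 0 w) (z i) := by
    intro z
    by_cases hz : z ∈ univ.pi s
    · rw [indicator_of_mem hz]
      exact Finset.prod_congr rfl fun i _ => (indicator_of_mem (hz i (Set.mem_univ i)) _).symm
    · rw [indicator_of_notMem hz]
      rw [Set.mem_pi] at hz
      push_neg at hz
      obtain ⟨i, _, hi⟩ := hz
      exact (Finset.prod_eq_zero (Finset.mem_univ i) (by simp [indicator_of_notMem, hi])).symm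
  rw [← lintegral_indicator (MeasurableSet.univ_pi hs)]
  simp_rw [this]
  rw [volume_pi, lintegral_pi_fin _ _ _ (fun i => (measurable_gaussianPDF 0 w).indicator (hs i))]
  exact Finset.prod_congr rfl fun i _ => by
    rw [lintegral_indicator (hs i), ← gaussianReal_apply _ hw]

lemma ofReal_half : ENNReal.ofReal (1/2) = 1/2 := by
  rw [ENNReal.ofReal_div_of_pos (by norm_num), ENNReal.ofReal_one, ENNReal.ofReal_ofNat]

lemma std_Ioi_zero : gaussianReal 0 1 (Ioi (0:ℝ)) = 1/2 := by
  have h0 : gaussianReal 0 1 ({(0:ℝ)}) = 0 := by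
    rw [gaussianReal_apply _ one_ne_zero]
    rw [setLIntegral_measure_zero _ _ (by simp)]
  have hsym : (gaussianReal 0 1).map (fun x : ℝ => (-1) * x) = gaussianReal 0 1 := by
    rw [gaussianReal_map_const_mul]
    norm_num
  have h1 : gaussianReal 0 1 (Iio (0:ℝ)) = gaussianReal 0 1 (Ioi (0:ℝ)) := by
    conv_lhs => rw [← hsym]
    rw [Measure.map_apply (by fun_prop) measurableSet_Iio]
    congr 1
    ext x
    simp
  have htot := measure_add_measure_compl (μ := gaussianReal 0 1) (measurableSet_Iic (a := (0:ℝ)))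
  rw [compl_Iic, measure_univ] at htot
  have h2 : gaussianReal 0 1 (Iic (0:ℝ)) = gaussianReal 0 1 (Ioi (0:ℝ)) := by
    rw [← Iio_union_right]
    have h3 : gaussianReal 0 1 (Iio (0:ℝ) ∪ {0}) = gaussianReal 0 1 (Iio 0) := by
      apply le_antisymm
      · calc gaussianReal 0 1 (Iio (0:ℝ) ∪ {0}) ≤ _ := measure_union_le _ _
          _ = gaussianReal 0 1 (Iio 0) := by rw [h0, add_zero]
      · exact measure_mono subset_union_left
    rw [h3, h1]
  rw [h2] at htot
  exact (ENNReal.eq_div_iff two_ne_zero (by norm_num)).2 (by rw [two_mul, htot])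

lemma gauss_tail_le {t : ℝ} (ht : 0 ≤ t) :
    gaussianReal 0 1 (Ioi t) ≤ ENNReal.ofReal (Real.exp (-t^2/2) * (1/2)) := by
  have key : ∀ x ∈ Ioi t, gaussianPDF 0 1 x
      ≤ ENNReal.ofReal (Real.exp (-t^2/2)) * gaussianPDF t 1 x := by
    intro x hx
    have hx' : t ≤ x := le_of_lt hx
    rw [gaussianPDF, gaussianPDF, ← ENNReal.ofReal_mul (Real.exp_nonneg _)]
    apply ENNReal.ofReal_le_ofReal
    rw [gaussianPDFReal, gaussianPDFReal]
    have hone : ((1:NNReal):ℝ) = 1 := rfl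
    calc (√(2 * π * (1:NNReal)))⁻¹ * rexp (-(x - 0) ^ 2 / (2 * (1:NNReal)))
        ≤ (√(2 * π * (1:NNReal)))⁻¹ * (rexp (-t^2/2) * rexp (-(x - t) ^ 2 / (2 * (1:NNReal)))) := by
          apply mul_le_mul_of_nonneg_left _ (by positivity)
          rw [← Real.exp_add]
          apply Real.exp_le_exp.2
          rw [hone]
          nlinarith [mul_nonneg ht (sub_nonneg.2 hx')]
      _ = rexp (-t^2/2) * ((√(2 * π * (1:NNReal)))⁻¹ * rexp (-(x - t) ^ 2 / (2 * (1:NNReal)))) := by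
          ring
  calc gaussianReal 0 1 (Ioi t) = ∫⁻ x in Ioi t, gaussianPDF 0 1 x := gaussianReal_apply _ one_ne_zero _
    _ ≤ ∫⁻ x in Ioi t, ENNReal.ofReal (Real.exp (-t^2/2)) * gaussianPDF t 1 x :=
        setLIntegral_mono (measurable_const.mul (measurable_gaussianPDF _ _)) key
    _ = ENNReal.ofReal (Real.exp (-t^2/2)) * ∫⁻ x in Ioi t, gaussianPDF t 1 x :=
        lintegral_const_mul _ (measurable_gaussianPDF _ _)
    _ = ENNReal.ofReal (Real.exp (-t^2/2)) * gaussianReal t 1 (Ioi t) := by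
        rw [gaussianReal_apply _ one_ne_zero]
    _ = ENNReal.ofReal (Real.exp (-t^2/2)) * gaussianReal 0 1 (Ioi 0) := by
        congr 1
        rw [show gaussianReal t 1 = (gaussianReal 0 1).map (· + t) by
          rw [gaussianReal_map_add_const]; norm_num]
        rw [Measure.map_apply (by fun_prop) measurableSet_Ioi]
        congr 1
        ext x
        simp
    _ = ENNReal.ofReal (Real.exp (-t^2/2) * (1/2)) := by
        rw [std_Ioi_zero, ENNReal.ofReal_mul (Real.exp_nonneg _), ofReal_half]

lemma gauss_tail_le_neg {t : ℝ} (ht : t ≤ 0) :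
    gaussianReal 0 1 (Ioi t) ≤ ENNReal.ofReal (1/2 + (-t) * (1/2)) := by
  have hsplit : Ioi t ⊆ Ioc t 0 ∪ Ioi 0 := by
    intro x hx
    rcases le_or_gt x 0 with h | h
    · exact Or.inl ⟨hx, h⟩
    · exact Or.inr h
  have hpdf_le : ∀ x : ℝ, gaussianPDF 0 1 x ≤ ENNReal.ofReal (1/2) := by
    intro x
    rw [gaussianPDF]
    apply ENNReal.ofReal_le_ofReal
    rw [gaussianPDFReal]
    have h2 : (2:ℝ) ≤ √(2 * π * ((1:NNReal):ℝ)) := by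
      have h4 : (4:ℝ) ≤ 2 * π * ((1:NNReal):ℝ) := by
        rw [show ((1:NNReal):ℝ) = 1 from rfl, mul_one]
        nlinarith [Real.pi_gt_three]
      calc (2:ℝ) = √4 := by
            rw [show (4:ℝ) = 2^2 by norm_num, Real.sqrt_sq (by norm_num : (0:ℝ) ≤ 2)]
        _ ≤ _ := Real.sqrt_le_sqrt h4
    calc (√(2 * π * (1:NNReal)))⁻¹ * rexp (-(x - 0) ^ 2 / (2 * (1:NNReal)))
        ≤ (√(2 * π * (1:NNReal)))⁻¹ * 1 := by
          apply mul_le_mul_of_nonneg_left _ (by positivity)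
          apply Real.exp_le_one_iff.2
          exact div_nonpos_iff.2 (Or.inr ⟨neg_nonpos.2 (sq_nonneg _), by positivity⟩)
      _ ≤ 1/2 := by
          rw [mul_one, one_div]
          exact inv_anti₀ (by norm_num) h2
  calc gaussianReal 0 1 (Ioi t) ≤ gaussianReal 0 1 (Ioc t 0) + gaussianReal 0 1 (Ioi 0) :=
        le_trans (measure_mono hsplit) (measure_union_le _ _)
    _ ≤ ENNReal.ofReal ((-t) * (1/2)) + ENNReal.ofReal (1/2) := by
        gcongr
        · rw [gaussianReal_apply _ one_ne_zero]
          calc ∫⁻ x in Ioc t 0, gaussianPDF 0 1 x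
              ≤ ∫⁻ _ in Ioc t 0, ENNReal.ofReal (1/2) :=
                setLIntegral_mono measurable_const (fun x _ => hpdf_le x)
            _ = ENNReal.ofReal (1/2) * volume (Ioc t 0) := setLIntegral_const _ _
            _ = ENNReal.ofReal ((-t) * (1/2)) := by
                rw [Real.volume_Ioc, ← ENNReal.ofReal_mul (by norm_num)]
                congr 1
                ring
        · rw [std_Ioi_zero, ofReal_half]
    _ = ENNReal.ofReal (1/2 + (-t) * (1/2)) := by
        rw [← ENNReal.ofReal_add (by nlinarith) (by norm_num)]
        congr 1
        ring

/-- `(ε,δ)`-differential privacy. -/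
def DiffPrivate {D Y : Type*} [MeasurableSpace Y] (adj : D → D → Prop)
    (M : D → Measure Y) (ε δ : ℝ) : Prop :=
  ∀ d d', adj d d' → ∀ S : Set Y, MeasurableSet S →
    M d S ≤ ENNReal.ofReal (Real.exp ε) * M d' S + ENNReal.ofReal δ

set_option maxHeartbeats 1600000 in
/-- The Gaussian mechanism achieves `(ε,δ)`-DP: for `ε ∈ (0,1)` and a function
`f : D → ℝ^k` of ℓ₂-sensitivity at most `Δ`, the mechanism `M(d) = f(d) + Z` with
`Z ~ N(0, σ²·I_k)` and `σ ≥ √(2·ln(1.25/δ))·Δ/ε` is `(ε,δ)`-differentially private. -/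
theorem gaussian_mechanism_dp {D : Type*} (adj : D → D → Prop)
    (k : ℕ) (f : D → (Fin k → ℝ))
    (Δ σ ε δ : ℝ) (hε : 0 < ε) (hε1 : ε < 1) (hδ : 0 < δ) (hδ1 : δ < 1)
    (hΔ : 0 < Δ)
    (hsens : ∀ d d', adj d d' →
      Real.sqrt (∑ i : Fin k, (f d i - f d' i) ^ 2) ≤ Δ)
    (hσ : σ ≥ Real.sqrt (2 * Real.log (1.25 / δ)) * Δ / ε)
    (M : D → Measure (Fin k → ℝ))
    (hM : M = fun d => Measure.map (fun z => f d + z)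
      (Measure.pi (fun _ : Fin k => gaussianReal 0 (Real.toNNReal (σ ^ 2))))) :
    DiffPrivate adj M ε δ := by
  subst hM
  intro d d' hadj S hS
  -- basic positivity
  set L : ℝ := Real.log (1.25 / δ) with hLdef
  have hL125 : (0:ℝ) < 1.25 / δ := by positivity
  have hL0 : 0 < L := Real.log_pos (by rw [lt_div_iff₀ hδ]; linarith)
  set c : ℝ := Real.sqrt (2 * L) with hcdef
  have hc0 : 0 < c := Real.sqrt_pos.2 (by linarith)
  have hc2 : c ^ 2 = 2 * L := Real.sq_sqrt (by linarith)
  have hσ0 : 0 < σ := lt_of_lt_of_le (by positivity) hσ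
  have hεσ : c * Δ ≤ ε * σ := by
    rw [ge_iff_le, div_le_iff₀ hε] at hσ
    linarith [hσ]
  set w : NNReal := Real.toNNReal (σ ^ 2) with hwdef
  have hw : w ≠ 0 := by
    rw [hwdef, ne_eq, Real.toNNReal_eq_zero, not_le]
    positivity
  have hwr : ((w : NNReal) : ℝ) = σ ^ 2 := Real.coe_toNNReal _ (by positivity)
  set μ : Measure (Fin k → ℝ) := Measure.pi fun _ : Fin k => gaussianReal 0 w with hμdef
  have hmd : Measurable (fun z : Fin k → ℝ => f d + z) := by fun_prop
  have hmd' : Measurable (fun z : Fin k → ℝ => f d' + z) := by fun_prop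
  set B : Set (Fin k → ℝ) := (fun z => f d + z) ⁻¹' S with hBdef
  set A : Set (Fin k → ℝ) := (fun z => f d' + z) ⁻¹' S with hAdef
  have hBmeas : MeasurableSet B := hS.preimage hmd
  have hAmeas : MeasurableSet A := hS.preimage hmd'
  have hMd : Measure.map (fun z => f d + z) μ S = μ B := Measure.map_apply hmd hS
  have hMd' : Measure.map (fun z => f d' + z) μ S = μ A := Measure.map_apply hmd' hS
  rw [hMd, hMd']
  set v : Fin k → ℝ := f d - f d' with hvdef
  have hvi : ∀ i, v i = f d i - f d' i := fun i => rfl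
  set s2 : ℝ := ∑ i, v i ^ 2 with hs2def
  have hs2nonneg : 0 ≤ s2 := Finset.sum_nonneg fun i _ => sq_nonneg _
  have hsensd : Real.sqrt s2 ≤ Δ := by
    have := hsens d d' hadj
    simpa [hs2def, hvi] using this
  rcases eq_or_lt_of_le hs2nonneg with hs2zero | hs2pos
  · -- degenerate case : f d = f d'
    have hveq : f d = f d' := by
      funext i
      have h := (Finset.sum_eq_zero_iff_of_nonneg (fun i _ => sq_nonneg (v i))).1 hs2zero.symm
        i (Finset.mem_univ i)
      have := sq_eq_zero_iff.1 h
      rw [hvi] at this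
      linarith
    have hBAeq : B = A := by rw [hBdef, hAdef, hveq]
    rw [hBAeq]
    calc μ A = 1 * μ A := (one_mul _).symm
      _ ≤ ENNReal.ofReal (Real.exp ε) * μ A := by
          gcongr
          rw [show (1 : ENNReal) = ENNReal.ofReal 1 by simp]
          exact ENNReal.ofReal_le_ofReal (Real.one_le_exp hε.le)
      _ ≤ ENNReal.ofReal (Real.exp ε) * μ A + ENNReal.ofReal δ := le_self_add
  -- main case
  set s : ℝ := Real.sqrt s2 with hsdef
  have hs0 : 0 < s := Real.sqrt_pos.2 hs2pos
  have hss : s ^ 2 = s2 := Real.sq_sqrt hs2nonneg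
  have hsΔ : s ≤ Δ := hsensd
  set τ : ℝ := ε * σ ^ 2 - s2 / 2 with hτdef
  set l : (Fin k → ℝ) → ℝ := fun z => ∑ i, v i * z i with hldef
  have hlmeas : Measurable l :=
    Finset.measurable_sum _ fun i _ => by fun_prop
  set E : Set (Fin k → ℝ) := l ⁻¹' (Ioi τ) with hEdef
  have hEmeas : MeasurableSet E := hlmeas measurableSet_Ioi
  set P : (Fin k → ℝ) → ENNReal := fun z => ∏ i, gaussianPDF 0 w (z i) with hPdef
  have hPmeas : Measurable P :=
    Finset.measurable_prod _ fun i _ => (measurable_gaussianPDF 0 w).comp (measurable_pi_apply i)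
  have hμeq : μ = (volume : Measure (Fin k → ℝ)).withDensity P := pi_gauss_withDensity k hw
  -- pointwise density comparison off E
  have hprod : ∀ y : Fin k → ℝ, ∏ i, gaussianPDFReal 0 w (y i)
      = ((√(2 * π * w))⁻¹) ^ k * rexp (∑ i, -(y i - 0) ^ 2 / (2 * w)) := by
    intro y
    simp only [gaussianPDFReal]
    rw [Finset.prod_mul_distrib, Finset.prod_const, Real.exp_sum]
    congr 1
    simp [Finset.card_univ]
  have hpt : ∀ z : Fin k → ℝ, z ∉ E →
      (∏ i, gaussianPDFReal 0 w (z i)) ≤ rexp ε * ∏ i, gaussianPDFReal 0 w (z i + v i) := by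
    intro z hz
    have hlz : l z ≤ τ := not_lt.1 hz
    have h1 := hprod z
    have h2 := hprod (z + v)
    simp only [Pi.add_apply] at h2
    rw [h1, h2]
    have hC : (0:ℝ) ≤ ((√(2 * π * w))⁻¹) ^ k := by positivity
    calc ((√(2 * π * w))⁻¹) ^ k * rexp (∑ i, -(z i - 0) ^ 2 / (2 * w))
        ≤ ((√(2 * π * w))⁻¹) ^ k * (rexp ε * rexp (∑ i, -(z i + v i - 0) ^ 2 / (2 * w))) := by
          apply mul_le_mul_of_nonneg_left _ hC
          rw [← Real.exp_add]
          apply Real.exp_le_exp.2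
          have hdiff : (∑ i, -(z i - 0) ^ 2 / (2 * (w:ℝ))) - (∑ i, -(z i + v i - 0) ^ 2 / (2 * (w:ℝ)))
              = (2 * l z + s2) / (2 * σ ^ 2) := by
            rw [← Finset.sum_sub_distrib, hldef, hs2def, Finset.mul_sum,
              ← Finset.sum_add_distrib, Finset.sum_div]
            apply Finset.sum_congr rfl
            intro i _
            rw [hwr]
            have hσ2 : (0:ℝ) < σ ^ 2 := by positivity
            field_simp
            ring
          have hbound : (2 * l z + s2) / (2 * σ ^ 2) ≤ ε := by
            rw [div_le_iff₀ (by positivity)]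
            rw [hτdef] at hlz
            linarith [hlz]
          linarith [hdiff, hbound]
      _ = rexp ε * (((√(2 * π * w))⁻¹) ^ k * rexp (∑ i, -(z i + v i - 0) ^ 2 / (2 * w))) := by
          ring
  have hpointE : ∀ z : Fin k → ℝ, z ∉ E → P z ≤ ENNReal.ofReal (rexp ε) * P (z + v) := by
    intro z hz
    have e1 : P z = ENNReal.ofReal (∏ i, gaussianPDFReal 0 w (z i)) := by
      rw [ENNReal.ofReal_prod_of_nonneg (fun i _ => gaussianPDFReal_nonneg _ _ _)]
      rfl
    have e2 : P (z + v) = ENNReal.ofReal (∏ i, gaussianPDFReal 0 w (z i + v i)) := by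
      rw [ENNReal.ofReal_prod_of_nonneg (fun i _ => gaussianPDFReal_nonneg _ _ _)]
      rfl
    rw [e1, e2, ← ENNReal.ofReal_mul (Real.exp_nonneg _)]
    exact ENNReal.ofReal_le_ofReal (hpt z hz)
  -- translation identity
  have htrans : ∫⁻ z in B, P (z + v) ∂(volume : Measure (Fin k → ℝ)) = μ A := by
    rw [← lintegral_indicator hBmeas]
    have hind : ∀ z : Fin k → ℝ, B.indicator (fun y => P (y + v)) z = A.indicator P (z + v) := by
      intro z
      by_cases hzB : z ∈ B
      · have hzA : z + v ∈ A := by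
          rw [hAdef, Set.mem_preimage]
          have : f d' + (z + v) = f d + z := by
            funext i
            simp [hvi]
            ring
          rw [this]
          exact hzB
        rw [indicator_of_mem hzB, indicator_of_mem hzA]
      · have hzA : z + v ∉ A := by
          rw [hAdef, Set.mem_preimage]
          have : f d' + (z + v) = f d + z := by
            funext i
            simp [hvi]
            ring
          rw [this]
          exact hzB
        rw [indicator_of_notMem hzB, indicator_of_notMem hzA]
    simp_rw [hind]
    rw [lintegral_add_right_eq_self (A.indicator P) v, lintegral_indicator hAmeas,
      hμeq, withDensity_apply _ hAmeas]
  -- bad event bound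
  have hEbound : μ E ≤ ENNReal.ofReal δ := by
    have hmapE : μ E = (μ.map l) (Ioi τ) := (Measure.map_apply hlmeas measurableSet_Ioi).symm
    have hmapl : μ.map l = gaussianReal 0 (∑ i, (v i ^ 2).toNNReal * w) :=
      pi_gauss_map_sum w k v
    set q : ℝ := s * σ with hqdef
    have hq0 : 0 < q := by positivity
    have hstd : gaussianReal 0 (∑ i, (v i ^ 2).toNNReal * w)
        = (gaussianReal 0 1).map (fun x => q * x) := by
      rw [gaussianReal_map_const_mul, mul_zero]
      congr 1
      apply NNReal.coe_injective
      have hcoe : ((∑ i, (v i ^ 2).toNNReal * w : NNReal) : ℝ) = s2 * σ ^ 2 := by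
        rw [NNReal.coe_sum, hs2def, Finset.sum_mul]
        apply Finset.sum_congr rfl
        intro i _
        rw [NNReal.coe_mul, Real.coe_toNNReal _ (sq_nonneg _), hwr]
      rw [hcoe, NNReal.coe_mul, NNReal.coe_one, NNReal.coe_mk, hqdef, mul_pow, hss]
      ring
    set t : ℝ := τ / q with htdef
    have hmeasE : μ E = gaussianReal 0 1 (Ioi t) := by
      rw [hmapE, hmapl, hstd,
        Measure.map_apply (show Measurable fun x : ℝ => q * x by fun_prop) measurableSet_Ioi,
        preimage_const_mul_Ioi₀ _ hq0]
    rw [hmeasE]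
    -- lower bound on t
    have hcsεσ : c * s ≤ ε * σ := le_trans (mul_le_mul_of_nonneg_left hsΔ hc0.le) hεσ
    have hcs : c * s ≤ σ := le_trans hcsεσ (mul_le_of_le_one_left hσ0.le hε1.le)
    have h1 : c * (s * σ) ≤ ε * σ ^ 2 := by
      have h := mul_le_mul_of_nonneg_right hcsεσ hσ0.le
      calc c * (s * σ) = c * s * σ := by ring
        _ ≤ ε * σ * σ := h
        _ = ε * σ ^ 2 := by ring
    have h2 : s ^ 2 / 2 ≤ s * σ / (2 * c) := by
      rw [div_le_div_iff₀ (by norm_num) (by positivity)]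
      have h := mul_le_mul_of_nonneg_left hcs hs0.le
      have e : s ^ 2 * (2 * c) = 2 * (s * (c * s)) := by ring
      have e2 : s * σ * 2 = 2 * (s * σ) := by ring
      linarith [h]
    have ht_low : c - 1 / (2 * c) ≤ t := by
      rw [htdef, le_div_iff₀ hq0, hqdef]
      have e1 : (c - 1 / (2 * c)) * (s * σ) = c * (s * σ) - s * σ / (2 * c) := by
        field_simp
      rw [e1, hτdef]
      rw [← hss]
      linarith
    rcases le_or_gt (1/2 : ℝ) δ with hδhalf | hδhalf
    · rcases le_or_gt 0 t with ht0 | ht0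
      · calc gaussianReal 0 1 (Ioi t) ≤ ENNReal.ofReal (rexp (-t^2/2) * (1/2)) := gauss_tail_le ht0
          _ ≤ ENNReal.ofReal δ := by
              apply ENNReal.ofReal_le_ofReal
              have h1 : rexp (-t^2/2) ≤ 1 := Real.exp_le_one_iff.2 (by linarith [sq_nonneg t])
              have h := mul_le_mul_of_nonneg_right h1 (by norm_num : (0:ℝ) ≤ 1/2)
              linarith
      · -- t < 0, need δ large
        have hcc : c - 1 / (2 * c) < 0 := lt_of_le_of_lt ht_low ht0
        have hc2small : c ^ 2 < 1 / 2 := by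
          by_contra hcon
          push_neg at hcon
          have : 1 / (2 * c) ≤ c := by
            rw [div_le_iff₀ (by positivity)]
            have e : c * (2 * c) = 2 * c ^ 2 := by ring
            linarith
          linarith
        have hLsmall : L < 1 / 4 := by linarith [hc2, hc2small]
        have hexp14 : rexp (1/4) ≤ 1.2841 := by
          have h4 : rexp (1/4) ^ 4 = rexp 1 := by
            rw [← Real.exp_nat_mul]
            norm_num
          by_contra hcon
          push_neg at hcon
          have hpow : (1.2841:ℝ) ^ 4 < rexp (1/4) ^ 4 :=
            pow_lt_pow_left₀ hcon (by norm_num) (by norm_num)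
          rw [h4] at hpow
          have := Real.exp_one_lt_d9
          norm_num at hpow
          linarith
        have hδbig : 1.25 / rexp (1/4) < δ := by
          have hexpL : rexp L = 1.25 / δ := Real.exp_log hL125
          have : rexp L < rexp (1/4) := Real.exp_lt_exp.2 hLsmall
          rw [hexpL] at this
          rw [div_lt_iff₀ (Real.exp_pos _)]
          rw [div_lt_iff₀ hδ] at this
          have e : rexp (1/4) * δ = δ * rexp (1/4) := mul_comm _ _
          linarith
        have hlog125 : (0.2:ℝ) ≤ Real.log 1.25 := by
          have := Real.one_sub_inv_le_log_of_pos (show (0:ℝ) < 1.25 by norm_num)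
          norm_num at this ⊢
          linarith
        have hLlog : Real.log 1.25 ≤ L := by
          rw [hLdef]
          apply Real.log_le_log (by norm_num)
          rw [le_div_iff₀ hδ]
          linarith
        have hclow : (0.632:ℝ) ≤ c := by
          rw [hcdef]
          rw [show (0.632:ℝ) = √(0.632^2) by rw [Real.sqrt_sq (by norm_num)]]
          apply Real.sqrt_le_sqrt
          norm_num
          linarith [hlog125, hLlog]
        calc gaussianReal 0 1 (Ioi t) ≤ ENNReal.ofReal (1/2 + (-t) * (1/2)) :=
              gauss_tail_le_neg ht0.le
          _ ≤ ENNReal.ofReal δ := by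
              apply ENNReal.ofReal_le_ofReal
              have hnt : -t ≤ 1 / (2 * c) := by
                have h := ht_low
                have : (0:ℝ) ≤ 1 / (2 * c) := by positivity
                linarith
              have h1c : 1 / (2 * c) ≤ 1 / (2 * 0.632) := by
                apply div_le_div_of_nonneg_left (by norm_num) (by positivity) (by linarith)
              have hrexp : (0:ℝ) < rexp (1/4) := Real.exp_pos _
              have hδb2 : (1.25:ℝ) / 1.2841 ≤ δ :=
                le_trans (div_le_div_of_nonneg_left (by norm_num) hrexp hexp14) hδbig.le
              have e1 : (1:ℝ) / (2 * 0.632) ≤ 0.7912 := by norm_num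
              have e2 : (0.973:ℝ) ≤ 1.25 / 1.2841 := by norm_num
              linarith
    · -- δ < 1/2 : Chernoff-type bound
      have hlog25 : (1/2:ℝ) ≤ Real.log 2.5 := by
        have hexp12 : rexp (1/2) ≤ 2.5 := by
          have h2 : rexp (1/2) ^ 2 = rexp 1 := by
            rw [← Real.exp_nat_mul]
            norm_num
          by_contra hcon
          push_neg at hcon
          have hpow : (2.5:ℝ) ^ 2 < rexp (1/2) ^ 2 :=
            pow_lt_pow_left₀ hcon (by norm_num) (by norm_num)
          rw [h2] at hpow
          have := Real.exp_one_lt_d9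
          norm_num at hpow
          linarith
        calc (1/2:ℝ) = Real.log (rexp (1/2)) := (Real.log_exp _).symm
          _ ≤ Real.log 2.5 := Real.log_le_log (Real.exp_pos _) hexp12
      have hL25 : Real.log 2.5 ≤ L := by
        rw [hLdef]
        apply Real.log_le_log (by norm_num)
        rw [le_div_iff₀ hδ]
        linarith
      have hc1 : 1 ≤ c := by
        rw [show (1:ℝ) = √1 by rw [Real.sqrt_one]]
        apply Real.sqrt_le_sqrt
        linarith
      have hmid : 0 ≤ c - 1 / (2 * c) := by
        have : 1 / (2 * c) ≤ 1 / 2 := by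
          apply div_le_div_of_nonneg_left (by norm_num) (by norm_num) (by linarith)
        linarith
      have ht0 : 0 ≤ t := le_trans hmid ht_low
      have hsq : (c - 1 / (2 * c)) ^ 2 ≤ t ^ 2 := by
        apply pow_le_pow_left₀ hmid ht_low
      have hexpand : (c - 1 / (2 * c)) ^ 2 = c ^ 2 - 1 + 1 / (4 * c ^ 2) := by
        field_simp
        ring
      have ht2 : 2 * L - 1 ≤ t ^ 2 := by
        have h4c : (0:ℝ) < 1 / (4 * c ^ 2) := by positivity
        linarith [hsq, hexpand, hc2, h4c]
      calc gaussianReal 0 1 (Ioi t) ≤ ENNReal.ofReal (rexp (-t^2/2) * (1/2)) := gauss_tail_le ht0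
        _ ≤ ENNReal.ofReal δ := by
            apply ENNReal.ofReal_le_ofReal
            have hlog2δ : rexp (-t^2/2) ≤ 2 * δ := by
              rw [show (2*δ:ℝ) = rexp (Real.log (2*δ)) by rw [Real.exp_log (by linarith)]]
              apply Real.exp_le_exp.2
              have e1 : Real.log (2*δ) = Real.log 2 + Real.log δ :=
                Real.log_mul (by norm_num) (ne_of_gt hδ)
              have e2 : L = Real.log 1.25 - Real.log δ := by
                rw [hLdef, Real.log_div (by norm_num) (ne_of_gt hδ)]
              have e3 : Real.log 2.5 = Real.log 1.25 + Real.log 2 := by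
                rw [show (2.5:ℝ) = 1.25 * 2 by norm_num, Real.log_mul (by norm_num) (by norm_num)]
              linarith [ht2]
            linarith
  -- assemble
  have hsubset : B ⊆ (B ∩ Eᶜ) ∪ E := by
    intro z hz
    by_cases hzE : z ∈ E
    · exact Or.inr hzE
    · exact Or.inl ⟨hz, hzE⟩
  have hmain : μ (B ∩ Eᶜ) ≤ ENNReal.ofReal (rexp ε) * μ A := by
    have hBE : MeasurableSet (B ∩ Eᶜ) := hBmeas.inter hEmeas.compl
    calc μ (B ∩ Eᶜ) = ∫⁻ z in B ∩ Eᶜ, P z ∂(volume : Measure (Fin k → ℝ)) := by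
          rw [hμeq, withDensity_apply _ hBE]
      _ ≤ ∫⁻ z in B ∩ Eᶜ, ENNReal.ofReal (rexp ε) * P (z + v) ∂(volume : Measure (Fin k → ℝ)) := by
          apply setLIntegral_mono (measurable_const.mul (hPmeas.comp (by fun_prop)))
          intro z hz
          exact hpointE z hz.2
      _ = ENNReal.ofReal (rexp ε) * ∫⁻ z in B ∩ Eᶜ, P (z + v) ∂(volume : Measure (Fin k → ℝ)) :=
          lintegral_const_mul _ (hPmeas.comp (by fun_prop))
      _ ≤ ENNReal.ofReal (rexp ε) * ∫⁻ z in B, P (z + v) ∂(volume : Measure (Fin k → ℝ)) := by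
          gcongr
          exact inter_subset_left
      _ = ENNReal.ofReal (rexp ε) * μ A := by rw [htrans]
  calc μ B ≤ μ ((B ∩ Eᶜ) ∪ E) := measure_mono hsubset
    _ ≤ μ (B ∩ Eᶜ) + μ E := measure_union_le _ _
    _ ≤ ENNReal.ofReal (rexp ε) * μ A + ENNReal.ofReal δ := add_le_add hmain hEbound
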